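/- arXiv:1511.06791 — 5 statements merged into one kernel-verified Lean document; each statement's English description precedes it below -/
import Mathlib

section
/- Fix an integer m > 1. In the ring of formal power series over ℤ/mℤ, the series B₀(q) = ∑_{n≥0} b(m·n) q^n satisfies B₀(q) = (∑_{j=0}^{m−1} (j+1) q^j) · B₀(q^m). -/
open PowerSeries

/-- The number of `m`-ary partitions of `n`: partitions of `n` all of whose
parts are powers of `m`. -/
noncomputable def maryPartitions (m n : ℕ) : ℕ :=
  Nat.card {p : n.Partition // ∀ x ∈ p.parts, ∃ k : ℕ, x = m ^ k}

/-- Substitution of `q^m` for `q` in a formal power series: `F(q) ↦ F(q^m)`. -/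
noncomputable def substPow (R : Type*) [Semiring R] (m : ℕ) (F : PowerSeries R) : PowerSeries R :=
  PowerSeries.mk fun n => if m ∣ n then PowerSeries.coeff (n / m) F else 0

namespace MaryAux

variable {m : ℕ}

abbrev Sub (m N : ℕ) := {p : N.Partition // ∀ x ∈ p.parts, ∃ k : ℕ, x = m ^ k}

def fwd (hm : 1 < m) (N : ℕ) (p : Sub m N) :
    Σ t : Fin (N / m + 1), Sub m (t : ℕ) := by
  classical
  let s := Multiset.count 1 p.1.parts
  let q := p.1.parts.filter (· ≠ 1)
  have hdvd : ∀ x ∈ q, x / m * m = x := by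
    intro x hx
    obtain ⟨hx1, hx2⟩ := Multiset.mem_filter.mp hx
    obtain ⟨k, rfl⟩ := p.2 x hx1
    cases k with
    | zero => simp at hx2
    | succ k => exact Nat.div_mul_cancel ⟨m ^ k, by ring⟩
  let t := (q.map (· / m)).sum
  have hmt : t * m = q.sum := by
    rw [← Multiset.sum_map_mul_right, Multiset.map_congr rfl hdvd, Multiset.map_id']
  have hsq : s + q.sum = N := by
    have := Multiset.filter_add_not (· = 1) p.1.parts
    have hsum : (p.1.parts.filter (· = 1)).sum + q.sum = N := by
      rw [← Multiset.sum_add]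
      simp only [q]
      rw [this]
      exact p.1.parts_sum
    rwa [Multiset.filter_eq', Multiset.sum_replicate, smul_eq_mul, mul_one] at hsum
  have ht : t ≤ N / m := by
    rw [Nat.le_div_iff_mul_le (by omega), hmt]
    omega
  refine ⟨⟨t, by omega⟩, ⟨⟨q.map (· / m), ?_, rfl⟩, ?_⟩⟩
  · intro x hx
    obtain ⟨y, hy, rfl⟩ := Multiset.mem_map.mp hx
    have h1 := hdvd y hy
    have hy1 : 0 < y := p.1.parts_pos (Multiset.mem_filter.mp hy).1
    rcases Nat.eq_zero_or_pos (y / m) with h | h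
    · rw [h, zero_mul] at h1; omega
    · exact h
  · intro x hx
    obtain ⟨y, hy, rfl⟩ := Multiset.mem_map.mp hx
    obtain ⟨hy1, hy2⟩ := Multiset.mem_filter.mp hy
    obtain ⟨k, rfl⟩ := p.2 y hy1
    cases k with
    | zero => simp at hy2
    | succ k => exact ⟨k, by rw [pow_succ, Nat.mul_div_cancel _ (by omega)]⟩

def bwd (hm : 1 < m) (N : ℕ) (x : Σ t : Fin (N / m + 1), Sub m (t : ℕ)) : Sub m N := by
  classical
  obtain ⟨⟨t, ht⟩, p'⟩ := x
  have htm : m * t ≤ N := by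
    have h2 : t ≤ N / m := by omega
    calc m * t ≤ m * (N / m) := Nat.mul_le_mul_left m h2
    _ ≤ N := Nat.mul_div_le N m
  refine ⟨⟨p'.1.parts.map (· * m) + Multiset.replicate (N - m * t) 1, ?_, ?_⟩, ?_⟩
  · intro x hx
    rcases Multiset.mem_add.mp hx with h | h
    · obtain ⟨y, hy, rfl⟩ := Multiset.mem_map.mp h
      have := p'.1.parts_pos hy
      positivity
    · rw [Multiset.eq_of_mem_replicate h]; omega
  · rw [Multiset.sum_add, Multiset.sum_replicate, smul_eq_mul, mul_one,
      Multiset.sum_map_mul_right, Multiset.map_id', p'.1.parts_sum, Fin.val_mk,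
      mul_comm]
    exact Nat.add_sub_cancel' htm
  · intro x hx
    rcases Multiset.mem_add.mp hx with h | h
    · obtain ⟨y, hy, rfl⟩ := Multiset.mem_map.mp h
      obtain ⟨k, rfl⟩ := p'.2 y hy
      exact ⟨k + 1, by ring⟩
    · rw [Multiset.eq_of_mem_replicate h]; exact ⟨0, by simp⟩

end MaryAux

namespace MaryAux

variable {m : ℕ}

lemma parts_split {N : ℕ} (p : Sub m N) :
    Multiset.count 1 p.1.parts + (p.1.parts.filter (· ≠ 1)).sum = N := by
  have h := Multiset.filter_add_not (· = 1) p.1.parts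
  have hsum : (p.1.parts.filter (· = 1)).sum + (p.1.parts.filter (fun x => ¬ x = 1)).sum = N := by
    rw [← Multiset.sum_add, h]; exact p.1.parts_sum
  rw [Multiset.filter_eq', Multiset.sum_replicate, smul_eq_mul, mul_one] at hsum
  exact hsum

lemma hdvd (hm : 1 < m) {N : ℕ} (p : Sub m N) :
    ∀ x ∈ p.1.parts.filter (· ≠ 1), x / m * m = x := by
  intro x hx
  obtain ⟨hx1, hx2⟩ := Multiset.mem_filter.mp hx
  obtain ⟨k, rfl⟩ := p.2 x hx1
  cases k with
  | zero => simp at hx2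
  | succ k => exact Nat.div_mul_cancel ⟨m ^ k, by ring⟩

lemma fwd_fst (hm : 1 < m) (N : ℕ) (p : Sub m N) :
    ((fwd hm N p).1 : ℕ) = ((p.1.parts.filter (· ≠ 1)).map (· / m)).sum := rfl

lemma fwd_parts (hm : 1 < m) (N : ℕ) (p : Sub m N) :
    (fwd hm N p).2.1.parts = (p.1.parts.filter (· ≠ 1)).map (· / m) := rfl

lemma bwd_parts (hm : 1 < m) (N : ℕ) (x : Σ t : Fin (N / m + 1), Sub m (t : ℕ)) :
    (bwd hm N x).1.parts = x.2.1.parts.map (· * m) + Multiset.replicate (N - m * (x.1 : ℕ)) 1 := by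
  obtain ⟨⟨t, ht⟩, p'⟩ := x
  rfl

lemma sigma_eq {N : ℕ} (t₁ t₂ : Fin (N / m + 1)) (p₁ : Sub m (t₁ : ℕ)) (p₂ : Sub m (t₂ : ℕ))
    (h : t₁ = t₂) (hp : p₁.1.parts = p₂.1.parts) :
    (⟨t₁, p₁⟩ : Σ t : Fin (N / m + 1), Sub m (t : ℕ)) = ⟨t₂, p₂⟩ := by
  subst h
  exact congrArg _ (Subtype.ext (Nat.Partition.ext hp))

def maryEquiv (hm : 1 < m) (N : ℕ) : Sub m N ≃ Σ t : Fin (N / m + 1), Sub m (t : ℕ) where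
  toFun := fwd hm N
  invFun := bwd hm N
  left_inv := by
    intro p
    apply Subtype.ext
    apply Nat.Partition.ext
    rw [bwd_parts, fwd_parts, fwd_fst, Multiset.map_map]
    have h1 : (p.1.parts.filter (· ≠ 1)).map ((fun x => x * m) ∘ (fun x => x / m))
        = (p.1.parts.filter (· ≠ 1)).map id :=
      Multiset.map_congr rfl (fun x hx => hdvd hm p x hx)
    rw [Multiset.map_id] at h1
    rw [h1]
    have h2 : m * ((p.1.parts.filter (· ≠ 1)).map (· / m)).sum
        = (p.1.parts.filter (· ≠ 1)).sum := by
      rw [mul_comm, ← Multiset.sum_map_mul_right]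
      have h2' : (p.1.parts.filter (· ≠ 1)).map (fun i => i / m * m)
          = (p.1.parts.filter (· ≠ 1)).map id :=
        Multiset.map_congr rfl (fun x hx => hdvd hm p x hx)
      rw [h2', Multiset.map_id]
    have h3 := parts_split p
    have h4 : N - m * ((p.1.parts.filter (· ≠ 1)).map (· / m)).sum
        = Multiset.count 1 p.1.parts := by omega
    rw [h4, ← Multiset.filter_eq' p.1.parts 1, add_comm]
    exact Multiset.filter_add_not (· = 1) p.1.parts
  right_inv := by
    intro x
    obtain ⟨⟨t, ht⟩, p'⟩ := x
    have hfilter : ((bwd hm N ⟨⟨t, ht⟩, p'⟩).1.parts).filter (· ≠ 1)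
        = p'.1.parts.map (· * m) := by
      rw [bwd_parts, Multiset.filter_add]
      have e1 : (p'.1.parts.map (· * m)).filter (· ≠ 1) = p'.1.parts.map (· * m) := by
        apply Multiset.filter_eq_self.mpr
        intro a ha
        obtain ⟨y, hy, rfl⟩ := Multiset.mem_map.mp ha
        have := p'.1.parts_pos hy
        nlinarith
      have e2 : (Multiset.replicate (N - m * t) 1).filter (· ≠ 1) = 0 := by
        apply Multiset.filter_eq_nil.mpr
        intro a ha
        rw [Multiset.eq_of_mem_replicate ha]
        simp
      rw [e1, e2, add_zero]
    have h5 : p'.1.parts.map ((fun x => x / m) ∘ (fun x => x * m)) = p'.1.parts.map id :=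
      Multiset.map_congr rfl (fun x _ => Nat.mul_div_cancel x (by omega))
    rw [Multiset.map_id] at h5
    apply sigma_eq
    · apply Fin.ext
      show (((bwd hm N ⟨⟨t, ht⟩, p'⟩).1.parts.filter (· ≠ 1)).map (· / m)).sum = ((⟨t, ht⟩ : Fin (N / m + 1)) : ℕ)
      rw [hfilter, Multiset.map_map, h5, p'.1.parts_sum]
    · show ((bwd hm N ⟨⟨t, ht⟩, p'⟩).1.parts.filter (· ≠ 1)).map (· / m) = p'.1.parts
      rw [hfilter, Multiset.map_map, h5]

end MaryAux

namespace MaryAux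

variable {m : ℕ}

lemma mary_rec (hm : 1 < m) (N : ℕ) :
    maryPartitions m N = ∑ t ∈ Finset.range (N / m + 1), maryPartitions m t := by
  classical
  rw [maryPartitions, Nat.card_congr (maryEquiv hm N), Nat.card_eq_fintype_card,
    Fintype.card_sigma, ← Fin.sum_univ_eq_sum_range (fun t => maryPartitions m t) (N / m + 1)]
  exact Finset.sum_congr rfl fun i _ => (Nat.card_eq_fintype_card).symm

lemma mary_floor_eq (hm : 1 < m) (u r : ℕ) (hr : r < m) :
    maryPartitions m (m * u + r) = maryPartitions m (m * u) := by
  rw [mary_rec hm, mary_rec hm]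
  have h1 : (m * u + r) / m = u := by
    rw [Nat.mul_add_div (by omega), Nat.div_eq_of_lt hr, add_zero]
  have h2 : (m * u) / m = u := Nat.mul_div_cancel_left u (by omega)
  rw [h1, h2]

lemma sum_block_zero (hm : 1 < m) (Q : ℕ) :
    (∑ t ∈ Finset.range (m * Q), (maryPartitions m t : ZMod m)) = 0 := by
  induction Q with
  | zero => simp
  | succ Q ih =>
    rw [Nat.mul_succ, Finset.sum_range_add, ih, zero_add]
    have : ∀ i ∈ Finset.range m,
        ((maryPartitions m (m * Q + i) : ZMod m)) = (maryPartitions m (m * Q) : ZMod m) := by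
      intro i hi
      rw [mary_floor_eq hm Q i (Finset.mem_range.mp hi)]
    rw [Finset.sum_congr rfl this, Finset.sum_const, Finset.card_range, nsmul_eq_mul,
      ZMod.natCast_self, zero_mul]

lemma key (hm : 1 < m) (n : ℕ) :
    (maryPartitions m (m * n) : ZMod m)
      = ((n % m : ℕ) + 1) * maryPartitions m (m * (n / m)) := by
  have hdm : (m * n) / m = n := Nat.mul_div_cancel_left n (by omega)
  have hn : m * (n / m) + (n % m + 1) = n + 1 := by
    have := Nat.div_add_mod n m; omega
  rw [mary_rec hm (m * n), hdm, ← hn, Finset.sum_range_add]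
  push_cast
  rw [sum_block_zero hm, zero_add]
  have : ∀ i ∈ Finset.range (n % m + 1),
      ((maryPartitions m (m * (n / m) + i) : ZMod m))
        = (maryPartitions m (m * (n / m)) : ZMod m) := by
    intro i hi
    have hi' : i < m := lt_of_lt_of_le (Finset.mem_range.mp hi) (by have := Nat.mod_lt n (show 0 < m by omega); omega)
    rw [mary_floor_eq hm _ i hi']
  rw [Finset.sum_congr rfl this, Finset.sum_const, Finset.card_range, nsmul_eq_mul]
  push_cast
  ring

end MaryAux


theorem B0_mod_m_functional_equation (m : ℕ) (hm : 1 < m) :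
    let B₀ : PowerSeries (ZMod m) := PowerSeries.mk fun n => (maryPartitions m (m * n) : ZMod m)
    B₀ = (∑ j ∈ Finset.range m, PowerSeries.C ((j : ZMod m) + 1) * X ^ j) *
      substPow (ZMod m) m B₀ := by
  intro B₀
  ext n
  rw [PowerSeries.coeff_mul]
  have hS : ∀ a : ℕ, (PowerSeries.coeff a)
      (∑ j ∈ Finset.range m, PowerSeries.C ((j : ZMod m) + 1) * X ^ j)
      = if a < m then ((a : ZMod m) + 1) else 0 := by
    intro a
    rw [map_sum]
    have : ∀ j ∈ Finset.range m,
        (PowerSeries.coeff a) (PowerSeries.C ((j : ZMod m) + 1) * X ^ j)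
          = if a = j then ((j : ZMod m) + 1) else 0 := by
      intro j _
      rw [PowerSeries.coeff_C_mul, PowerSeries.coeff_X_pow]
      split <;> simp
    rw [Finset.sum_congr rfl this, Finset.sum_ite_eq (Finset.range m) a
      (fun j => ((j : ZMod m) + 1))]
    simp [Finset.mem_range]
  have hB : ∀ b : ℕ, (PowerSeries.coeff b) (substPow (ZMod m) m B₀)
      = if m ∣ b then (maryPartitions m (m * (b / m)) : ZMod m) else 0 := by
    intro b
    rw [substPow, PowerSeries.coeff_mk]
    split
    · rw [PowerSeries.coeff_mk]
    · rfl
  rw [Finset.sum_eq_single (n % m, n - n % m)]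
  · rw [hS, hB, PowerSeries.coeff_mk]
    have hmod : n % m < m := Nat.mod_lt n (by omega)
    have hsub : n - n % m = m * (n / m) := by
      have := Nat.div_add_mod n m; omega
    rw [if_pos hmod, hsub, if_pos ⟨n / m, rfl⟩,
      Nat.mul_div_cancel_left _ (show 0 < m by omega)]
    exact MaryAux.key hm n
  · intro p hp hne
    rw [Finset.HasAntidiagonal.mem_antidiagonal] at hp
    rw [hS, hB]
    by_cases h1 : p.1 < m
    · by_cases h2 : m ∣ p.2
      · exfalso
        apply hne
        obtain ⟨c, hc⟩ := h2
        have hp1 : p.1 = n % m := by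
          rw [← hp, hc, Nat.add_mul_mod_self_left, Nat.mod_eq_of_lt h1]
        exact Prod.ext hp1 (by omega)
      · rw [if_neg h2, mul_zero]
    · rw [if_neg h1, zero_mul]
  · intro h
    exfalso
    apply h
    rw [Finset.HasAntidiagonal.mem_antidiagonal]
    have := Nat.mod_le n m
    omega
end

section
/- Fix an integer m > 1. Let C(q) = ∑_{n≥0} c(n) q^n be the unique formal power series over ℤ satisfying (1−q)·C(q) = (1−q) + q·C(q^m). Then for every nonnegative integer i and every j with 0 ≤ j ≤ m−1, c(m·(m·i + j) + 1) ≡ 1 + j·c(m·i + 1) (mod m). -/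
open PowerSeries

theorem noGap_mod_m (m : ℕ) (hm : 1 < m) (C : PowerSeries ℤ)
    (hC : (1 - X) * C = (1 - X) + X * substPow ℤ m C) (c : ℕ → ℤ)
    (hc : ∀ n, c n = PowerSeries.coeff n C) (i j : ℕ) (hj : j ≤ m - 1) :
    c (m * (m * i + j) + 1) ≡ 1 + (j : ℤ) * c (m * i + 1) [ZMOD (m : ℤ)] := by
  have hm0 : m ≠ 0 := by omega
  -- constant coefficient: c 0 = 1
  have h0 : c 0 = 1 := by
    have h := congrArg (PowerSeries.constantCoeff (R := ℤ)) hC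
    simp at h
    rw [hc 0, coeff_zero_eq_constantCoeff]
    exact h
  -- coefficient recurrence
  have hrec : ∀ n : ℕ, c (n + 1) = c n + (if n = 0 then (-1 : ℤ) else 0)
      + (if m ∣ n then c (n / m) else 0) := by
    intro n
    have h := congrArg (PowerSeries.coeff (R := ℤ) (n + 1)) hC
    rw [sub_mul, one_mul, map_sub, map_add, coeff_succ_X_mul, coeff_succ_X_mul] at h
    simp only [substPow, coeff_mk, map_sub, coeff_one, coeff_X] at h
    simp only [hc]
    split_ifs at h ⊢ with h1 h2 h2 <;> simp_all <;> linarith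
  have h1 : c 1 = 1 := by
    have := hrec 0
    simp [Nat.zero_div, h0] at this
    linarith [this]
  -- non-multiples of m
  have hndvd : ∀ k s : ℕ, 1 ≤ s → s < m → ¬ m ∣ (m * k + s) := by
    intro k s hs1 hs2 hdvd
    have h2 : m ∣ s := (Nat.dvd_add_right ⟨k, rfl⟩).mp hdvd
    have := Nat.le_of_dvd (by omega) h2
    omega
  have hA : ∀ n : ℕ, n ≠ 0 → ¬ m ∣ n → c (n + 1) = c n := by
    intro n hn hnd
    have := hrec n
    simp [hn, hnd] at this
    exact this
  have hB : ∀ k : ℕ, k ≠ 0 → c (m * k + 1) = c (m * k) + c k := by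
    intro k hk
    have hd : m ∣ m * k := Dvd.intro k rfl
    have := hrec (m * k)
    have hk0 : m * k ≠ 0 := by positivity
    simp [hk0, hd, Nat.mul_div_cancel_left k (by omega : 0 < m)] at this
    linarith [this]
  -- c is constant on blocks
  have hconst : ∀ k r : ℕ, r ≤ m - 1 → c (m * k + 1 + r) = c (m * k + 1) := by
    intro k r
    induction r with
    | zero => intro _; rfl
    | succ r ih =>
      intro hr
      have hkey : c (m * k + (1 + r) + 1) = c (m * k + (1 + r)) :=
        hA _ (by omega) (hndvd k (1 + r) (by omega) (by omega))
      have e1 : m * k + 1 + (r + 1) = m * k + (1 + r) + 1 := by ring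
      have e2 : m * k + 1 + r = m * k + (1 + r) := by ring
      rw [e1, hkey, ← e2, ih (by omega)]
  have hstep : ∀ k : ℕ, c (m * (k + 1) + 1) = c (m * k + 1) + c (k + 1) := by
    intro k
    have h2 := hB (k + 1) (Nat.succ_ne_zero k)
    have e : m * (k + 1) = m * k + 1 + (m - 1) := by
      have : m * (k + 1) = m * k + m := by ring
      omega
    rw [h2, e, hconst k (m - 1) le_rfl]
  -- a(m i + r) = a(m i) + r * c(m i + 1)
  have lemA : ∀ i r : ℕ, r ≤ m - 1 →
      c (m * (m * i + r) + 1) = c (m * (m * i) + 1) + (r : ℤ) * c (m * i + 1) := by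
    intro i r
    induction r with
    | zero => intro _; simp
    | succ r ih =>
      intro hr
      have e : m * i + r + 1 = (m * i + r) + 1 := rfl
      rw [show m * i + (r + 1) = (m * i + r) + 1 from by ring, hstep (m * i + r),
        ih (by omega)]
      have : c (m * i + r + 1) = c (m * i + 1) := by
        have := hconst i r (by omega)
        rw [show m * i + r + 1 = m * i + 1 + r from by ring, this]
      rw [this]
      push_cast
      ring
  -- a(m i) ≡ 1 mod m
  have lemB : ∀ i : ℕ, c (m * (m * i) + 1) ≡ 1 [ZMOD (m : ℤ)] := by
    intro i
    induction i with
    | zero => simp [h1]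
    | succ i ih =>
      have e : m * (i + 1) = (m * i + (m - 1)) + 1 := by
        have : m * (i + 1) = m * i + m := by ring
        omega
      have h2 : c (m * (m * (i + 1)) + 1)
          = c (m * (m * i) + 1) + (m : ℤ) * c (m * i + 1) := by
        rw [e, hstep (m * i + (m - 1)), lemA i (m - 1) le_rfl]
        have : c (m * i + (m - 1) + 1) = c (m * i + 1) := by
          rw [show m * i + (m - 1) + 1 = m * i + 1 + (m - 1) from by ring,
            hconst i (m - 1) le_rfl]
        rw [this]
        have : ((m - 1 : ℕ) : ℤ) = (m : ℤ) - 1 := by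
          push_cast [Nat.cast_sub (by omega : 1 ≤ m)]; ring
        rw [this]; ring
      rw [h2]
      have hz : (m : ℤ) * c (m * i + 1) ≡ 0 [ZMOD (m : ℤ)] :=
        (Int.modEq_zero_iff_dvd).mpr ⟨c (m * i + 1), rfl⟩
      calc c (m * (m * i) + 1) + (m : ℤ) * c (m * i + 1)
          ≡ 1 + 0 [ZMOD (m : ℤ)] := Int.ModEq.add ih hz
        _ = 1 := by ring
  rw [lemA i j hj]
  exact Int.ModEq.add_right _ (lemB i)
end

section
/- Fix an integer m > 1. Let C(q) = ∑_{n≥0} c(n) q^n be the unique formal power series over ℤ satisfying (1−q)·C(q) = (1−q) + q·C(q^m), and let C₁(q) = ∑_{n≥0} c(m·n+1) q^n. Then C₁ satisfies the functional equation (1−q)² · C₁(q) = (1−q) + q·(1−q^m) · C₁(q^m). -/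
open PowerSeries

lemma coeff_one_sub_X_mul (k : ℕ) (G : PowerSeries ℤ) :
    PowerSeries.coeff k ((1 - X) * G) =
      PowerSeries.coeff k G - if 1 ≤ k then PowerSeries.coeff (k - 1) G else 0 := by
  rw [sub_mul, one_mul, map_sub, show (X * G : PowerSeries ℤ) = X ^ 1 * G by ring,
    coeff_X_pow_mul']

lemma substPow_one_sub_X_mul (m : ℕ) (hm : 1 < m) (F : PowerSeries ℤ) :
    substPow ℤ m ((1 - X) * F) = (1 - X ^ m) * substPow ℤ m F := by
  have hmn : 0 < m := by omega
  ext n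
  conv_rhs => rw [sub_mul, one_mul]
  rw [map_sub, coeff_X_pow_mul']
  simp only [substPow, coeff_mk, coeff_one_sub_X_mul]
  by_cases h : m ∣ n
  · obtain ⟨t, rfl⟩ := h
    rw [Nat.mul_div_cancel_left t hmn]
    rcases t with _ | u
    · simp [Nat.le_zero, hmn.ne']
    · have e2 : m * (u + 1) - m = m * u := by rw [Nat.mul_succ]; omega
      have h' : m ∣ m * (u + 1) := ⟨u + 1, rfl⟩
      rw [e2, Nat.mul_div_cancel_left u hmn, if_pos h', if_pos h',
        if_pos (by omega : 1 ≤ u + 1), if_pos (Nat.le_mul_of_pos_right m (by omega)),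
        if_pos (dvd_mul_right m u)]
      norm_num
  · rw [if_neg h, if_neg h]
    by_cases h2 : m ≤ n
    · rw [if_pos h2, if_neg (fun ⟨s, hs⟩ => h ⟨s + 1, by rw [Nat.mul_succ]; omega⟩)]
      ring
    · rw [if_neg h2]
      ring

theorem C1_functional_equation (m : ℕ) (hm : 1 < m) (C : PowerSeries ℤ)
    (hC : (1 - X) * C = (1 - X) + X * substPow ℤ m C) :
    let C₁ : PowerSeries ℤ := PowerSeries.mk fun n => PowerSeries.coeff (m * n + 1) C
    (1 - X) ^ 2 * C₁ = (1 - X) + X * (1 - X ^ m) * substPow ℤ m C₁ := by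
  intro C₁
  have hmn : 0 < m := by omega
  have h0 : PowerSeries.coeff 0 C = 1 := by
    have := congrArg (PowerSeries.coeff 0) hC
    rw [coeff_one_sub_X_mul] at this
    simpa using this
  have hrec : ∀ k : ℕ, PowerSeries.coeff (k + 1) C =
      PowerSeries.coeff k C + (if m ∣ k then PowerSeries.coeff (k / m) C else 0)
        - (if k = 0 then 1 else 0) := by
    intro k
    have h := congrArg (PowerSeries.coeff (k + 1)) hC
    rw [coeff_one_sub_X_mul, map_add, map_sub, coeff_one, coeff_succ_X_mul] at h
    simp only [substPow, coeff_mk, coeff_X] at h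
    rw [if_pos (by omega : 1 ≤ k + 1), Nat.add_sub_cancel] at h
    by_cases hk : k = 0
    · subst hk
      rw [if_neg (by omega : ¬ (0 + 1 : ℕ) = 0), if_pos rfl] at h
      rw [if_pos rfl, if_pos (Nat.dvd_zero m), Nat.zero_div] at *
      linarith
    · rw [if_neg (by omega : ¬ (k + 1 : ℕ) = 0), if_neg (by omega : ¬ k + 1 = 1)] at h
      rw [if_neg hk]
      linarith
  have hblock : ∀ n : ℕ, ∀ i : ℕ, i ≤ m - 1 →
      PowerSeries.coeff (m * n + 1 + i) C = PowerSeries.coeff (m * n + 1) C := by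
    intro n i
    induction i with
    | zero => intro _; rfl
    | succ i ih =>
      intro hi
      have hd : ¬ m ∣ (m * n + 1 + i) := by
        rintro ⟨s, hs⟩
        have h1 : m * n < m * s := by omega
        have h2 : n < s := lt_of_mul_lt_mul_left h1 (Nat.zero_le m)
        have h3 : m * (n + 1) ≤ m * s := Nat.mul_le_mul_left m h2
        have h4 : m * (n + 1) = m * n + m := by rw [Nat.mul_succ]
        omega
      have := hrec (m * n + 1 + i)
      rw [if_neg hd, if_neg (by omega)] at this
      rw [show m * n + 1 + (i + 1) = m * n + 1 + i + 1 by ring, this, ih (by omega)]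
      ring
  have hkey : (1 - X) * C₁ = C := by
    ext k
    rw [coeff_one_sub_X_mul]
    simp only [C₁, coeff_mk]
    rcases k with _ | j
    · rw [if_neg (by omega)]
      have h1 := hrec 0
      rw [if_pos (Nat.dvd_zero m), Nat.zero_div, if_pos rfl] at h1
      simp only [mul_zero, zero_add]
      rw [h1, h0]
      ring
    · rw [if_pos (by omega : 1 ≤ j + 1), Nat.add_sub_cancel]
      have h1 := hrec (m * (j + 1))
      rw [if_pos ⟨j + 1, rfl⟩, Nat.mul_div_cancel_left _ hmn,
        if_neg (Nat.mul_ne_zero (by omega) (by omega))] at h1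
      have h2 : PowerSeries.coeff (m * (j + 1)) C = PowerSeries.coeff (m * j + 1) C := by
        have := hblock j (m - 1) (le_refl _)
        rw [show m * j + 1 + (m - 1) = m * (j + 1) by rw [Nat.mul_succ]; omega] at this
        exact this
      rw [h1, h2]
      ring
  have hsub : substPow ℤ m C = (1 - X ^ m) * substPow ℤ m C₁ := by
    rw [← hkey, substPow_one_sub_X_mul m hm]
  calc (1 - X) ^ 2 * C₁ = (1 - X) * ((1 - X) * C₁) := by ring
    _ = (1 - X) * C := by rw [hkey]
    _ = (1 - X) + X * substPow ℤ m C := hC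
    _ = (1 - X) + X * (1 - X ^ m) * substPow ℤ m C₁ := by rw [hsub]; ring
end

section
/- Fix an integer m > 1. In the ring of formal power series over ℤ/mℤ, the series C₁(q) = ∑_{n≥0} c(m·n+1) q^n satisfies (1−q)·C₁(q) = 1 + (1−q)·(∑_{j=0}^{m−1} j·q^j) · C₁(q^m), i.e., C₁(q) ≡ 1/(1−q) + (∑_{j=0}^{m−1} j·q^j) · C₁(q^m) (mod m). -/
open PowerSeries

lemma geom_aux {R : Type*} [CommRing R] (k : ℕ) :
    (1 - X) * ∑ j ∈ Finset.range (k + 1), PowerSeries.C (j : R) * X ^ j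
      = (∑ j ∈ Finset.range (k + 1), X ^ j) - 1 - PowerSeries.C (k : R) * X ^ (k + 1) := by
  induction k with
  | zero => simp
  | succ k ih =>
    rw [Finset.sum_range_succ, Finset.sum_range_succ (fun j => (X : PowerSeries R) ^ j),
      mul_add, ih]
    have hcast : PowerSeries.C ((k + 1 : ℕ) : R) = PowerSeries.C (k : R) + 1 := by
      push_cast
      rw [map_add, map_one]
    rw [hcast]
    ring

theorem C1_mod_m_functional_equation (m : ℕ) (hm : 1 < m) (C : PowerSeries ℤ)
    (hC : (1 - X) * C = (1 - X) + X * substPow ℤ m C) :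
    let C₁ : PowerSeries (ZMod m) :=
      PowerSeries.mk fun n => ((PowerSeries.coeff (m * n + 1) C : ℤ) : ZMod m)
    (1 - X) * C₁ =
      1 + (1 - X) * (∑ j ∈ Finset.range m, PowerSeries.C (j : ZMod m) * X ^ j) *
        substPow (ZMod m) m C₁ := by
  intro C₁
  have hm0 : 0 < m := by omega
  -- coefficient recurrence for C over ℤ
  have hA : ∀ n : ℕ, coeff (n + 1) C =
      coeff n C + (if n = 0 then (-1 : ℤ) else 0) +
      (if m ∣ n then coeff (n / m) C else 0) := by
    intro n
    have h := congrArg (coeff (n + 1)) hC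
    rw [sub_mul, one_mul, map_sub, coeff_succ_X_mul, map_add, map_sub, coeff_succ_X_mul] at h
    simp only [coeff_one, coeff_X, substPow, coeff_mk] at h
    split_ifs at h ⊢ <;> first | contradiction | omega | linarith
  have hB : coeff 0 C = 1 := by
    have h := congrArg (constantCoeff) hC
    simp only [map_mul, map_sub, map_add, map_one, constantCoeff_X, zero_mul, sub_zero,
      one_mul, add_zero] at h
    simpa [coeff_zero_eq_constantCoeff] using h
  have hC1 : coeff 1 C = 1 := by
    have h := hA 0
    simp [hB] at h
    linarith
  -- constancy on blocks
  have hD : ∀ q r : ℕ, 1 ≤ r → r ≤ m →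
      coeff (m * q + r) C = coeff (m * q + 1) C := by
    intro q r h1
    induction r, h1 using Nat.le_induction with
    | base => intro _; rfl
    | succ r hr ih =>
      intro hle
      have hnd : ¬ m ∣ m * q + r := by
        intro hd
        have h2 : m ∣ r := (Nat.dvd_add_right (Dvd.intro q rfl)).mp hd
        exact absurd (Nat.le_of_dvd (by omega) h2) (by omega)
      have h := hA (m * q + r)
      rw [if_neg (by omega), if_neg hnd, add_zero, add_zero] at h
      rw [show m * q + (r + 1) = (m * q + r) + 1 from rfl, h, ih (by omega)]
  -- block jump
  have hE : ∀ k : ℕ, coeff (m * (k + 1) + 1) C = coeff (m * k + 1) C + coeff (k + 1) C := by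
    intro k
    have h := hA (m * (k + 1))
    rw [if_neg (by positivity), if_pos (Dvd.intro _ rfl), Nat.mul_div_cancel_left _ hm0,
      add_zero] at h
    rw [h, Nat.mul_succ, hD k m (by omega) le_rfl]
  have hF : ∀ k : ℕ, coeff (k + 1) C = coeff (m * (k / m) + 1) C := by
    intro k
    have h := Nat.div_add_mod k m
    have hlt : k % m < m := Nat.mod_lt k hm0
    rw [show k + 1 = m * (k / m) + (k % m + 1) by rw [← add_assoc, h]]
    exact hD (k / m) (k % m + 1) (by omega) (by omega)
  set c₁ : ℕ → ZMod m := fun n => ((coeff (m * n + 1) C : ℤ) : ZMod m) with hc₁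
  have hC₁ : C₁ = PowerSeries.mk c₁ := rfl
  have hstep : ∀ k : ℕ, c₁ (k + 1) = c₁ k + c₁ (k / m) := by
    intro k
    simp only [hc₁]
    rw [hE k, hF k, Int.cast_add]
  have hc₁0 : c₁ 0 = 1 := by
    simp only [hc₁, Nat.mul_zero, Nat.zero_add, hC1, Int.cast_one]
  -- the (1-X)*S computation
  have hK : (1 - X) * (∑ j ∈ Finset.range m, PowerSeries.C (j : ZMod m) * X ^ j)
      = (∑ j ∈ Finset.range m, (X : PowerSeries (ZMod m)) ^ j) - 1 + X ^ m := by
    obtain ⟨k, rfl⟩ : ∃ k, m = k + 1 := ⟨m - 1, by omega⟩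
    rw [geom_aux k]
    have : ((k : ℕ) : ZMod (k + 1)) = -1 := by
      have h := ZMod.natCast_self (k + 1)
      push_cast at h ⊢
      linear_combination h
    rw [this, map_neg, map_one, neg_one_mul, sub_neg_eq_add]
  set D : PowerSeries (ZMod m) := substPow (ZMod m) m C₁ with hDdef
  have hd : ∀ n : ℕ, coeff n D = if m ∣ n then c₁ (n / m) else 0 := by
    intro n
    simp only [hDdef, substPow, coeff_mk, hC₁]
  have hGD : ∀ n : ℕ, (∑ j ∈ Finset.range m, coeff n ((X : PowerSeries (ZMod m)) ^ j * D))
      = c₁ (n / m) := by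
    intro n
    rw [Finset.sum_eq_single (n % m)]
    · rw [PowerSeries.coeff_X_pow_mul', if_pos (Nat.mod_le n m)]
      have h2 : n - n % m = m * (n / m) :=
        Nat.sub_eq_of_eq_add (Nat.div_add_mod n m).symm
      rw [h2, hd, if_pos (Dvd.intro _ rfl), Nat.mul_div_cancel_left _ hm0]
    · intro j hj hne
      rw [PowerSeries.coeff_X_pow_mul']
      split_ifs with hjn
      · rw [hd, if_neg]
        rintro ⟨t, ht⟩
        have hn : n = m * t + j := by
          have := (Nat.sub_eq_iff_eq_add hjn).mp ht
          omega
        apply hne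
        rw [hn, Nat.mul_add_mod, Nat.mod_eq_of_lt (Finset.mem_range.mp hj)]
      · rfl
    · intro h
      exact absurd (Finset.mem_range.mpr (Nat.mod_lt n hm0)) h
  -- main computation
  rw [hK]
  have hexpand : ((∑ j ∈ Finset.range m, (X : PowerSeries (ZMod m)) ^ j) - 1 + X ^ m) * D
      = (∑ j ∈ Finset.range m, (X : PowerSeries (ZMod m)) ^ j * D) - D + X ^ m * D := by
    rw [add_mul, sub_mul, one_mul, Finset.sum_mul]
  rw [hexpand]
  ext n
  rw [sub_mul, one_mul, map_sub, map_add, map_add, map_sub, map_sum, hGD]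
  cases n with
  | zero =>
    have hX0 : coeff 0 (X * C₁) = 0 := by
      rw [coeff_zero_eq_constantCoeff, map_mul, constantCoeff_X, zero_mul]
    have hXm0 : coeff 0 ((X : PowerSeries (ZMod m)) ^ m * D) = 0 := by
      rw [PowerSeries.coeff_X_pow_mul', if_neg (by omega)]
    rw [hX0, hXm0, hd 0, if_pos (dvd_zero m)]
    rw [hC₁, coeff_mk]
    simp [hc₁0, Nat.zero_div]
  | succ k =>
    rw [coeff_succ_X_mul, hC₁, coeff_mk, coeff_mk, hstep k, coeff_one,
      if_neg (Nat.succ_ne_zero k), PowerSeries.coeff_X_pow_mul', hd (k + 1)]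
    by_cases hdvd : m ∣ k + 1
    · obtain ⟨t, ht⟩ := hdvd
      have ht1 : 1 ≤ t := by
        rcases t with _ | t
        · rw [mul_zero] at ht; omega
        · omega
      have hle : m ≤ k + 1 := by
        calc m = m * 1 := (mul_one m).symm
        _ ≤ m * t := Nat.mul_le_mul_left m ht1
        _ = k + 1 := ht.symm
      have hsub : k + 1 - m = m * (t - 1) := by
        rw [Nat.mul_sub, mul_one, ← ht]
      have hq : (k + 1) / m = t := by rw [ht, Nat.mul_div_cancel_left _ hm0]
      have hkq : k / m = t - 1 := by
        have h := Nat.succ_div (a := k) (b := m)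
        rw [if_pos ⟨t, ht⟩, hq] at h
        omega
      rw [if_pos ⟨t, ht⟩, if_pos hle, hsub, hd, if_pos (Dvd.intro _ rfl),
        Nat.mul_div_cancel_left _ hm0, hq, hkq]
      ring
    · have hq : (k + 1) / m = k / m := by
        have h := Nat.succ_div (a := k) (b := m)
        rw [if_neg hdvd] at h
        omega
      rw [if_neg hdvd, hq, sub_zero]
      have hz : (if m ≤ k + 1 then coeff (k + 1 - m) D else 0) = 0 := by
        split_ifs with hle
        · rw [hd, if_neg]
          intro ⟨t, ht⟩
          exact hdvd ⟨t + 1, by rw [Nat.mul_add, mul_one, ← ht]; omega⟩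
        · rfl
      rw [hz]
      ring
end

section
/- Fix an odd integer m > 1. Let c(n) be the number of partitions of n into parts that are either powers of m or twice powers of m, let d(n) = c(m·(n+1) − 1), and let D(q) = ∑_{n≥0} d(n) q^n, viewed as a formal power series over ℤ/mℤ. Then D(q) = (1+q)·(∑_{j=0}^{m−2} C(j+2, 2)·q^{2j}) · D(q^m), where C(j+2, 2) = (j+1)(j+2)/2 is a binomial coefficient. -/
open PowerSeries

/-- The number of partitions of `n` into parts that are powers of `m` or twice powers of `m`. -/
noncomputable def maryTwicePartitions (m n : ℕ) : ℕ :=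
  Nat.card {p : n.Partition // ∀ x ∈ p.parts, ∃ k : ℕ, x = m ^ k ∨ x = 2 * m ^ k}

namespace MTPaux
open Finset



/-- `2 * choose (k+1) 2 = (k+1)*k` -/
lemma two_mul_choose_two : ∀ k : ℕ, 2 * Nat.choose (k + 1) 2 = (k + 1) * k := by
  intro k
  induction k with
  | zero => simp
  | succ j ih =>
    rw [show j + 1 + 1 = (j + 1) + 1 from rfl, Nat.choose_succ_succ (j+1) 1,
      Nat.mul_add, ih, Nat.choose_one_right]
    ring

lemma evensum (N : ℕ) :
    ∑ x ∈ range (N + 1), (if x % 2 = 0 then (N - x) / 2 + 1 else 0)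
      = Nat.choose (N / 2 + 2) 2 := by
  rw [← Finset.sum_filter]
  rw [Finset.sum_nbij' (i := fun x => x / 2) (j := fun j => 2 * j)
    (t := range (N / 2 + 1)) (g := fun j => N / 2 - j + 1)
    (by intro a ha; simp only [mem_filter, mem_range] at ha ⊢; omega)
    (by intro a ha; simp only [mem_filter, mem_range] at ha ⊢; omega)
    (by intro a ha; simp only [mem_filter, mem_range] at ha; omega)
    (by intro a ha; simp only [mem_filter, mem_range] at ha; omega)
    (by intro a ha; simp only [mem_filter, mem_range] at ha; omega)]
  have h1 : ∑ j ∈ range (N / 2 + 1), (N / 2 - j + 1)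
      = ∑ j ∈ range (N / 2 + 1), (j + 1) := by
    rw [← Finset.sum_range_reflect (fun j => j + 1) (N / 2 + 1)]
    apply Finset.sum_congr rfl
    intro x hx
    simp only [mem_range] at hx
    omega
  rw [h1]
  have h2 : ∑ j ∈ range (N / 2 + 1), (j + 1) = ∑ j ∈ range (N / 2 + 2), j := by
    rw [Finset.sum_range_succ' (fun j => j) (N / 2 + 1)]
    simp
  rw [h2, Finset.sum_range_id, Nat.choose_two_right]

lemma inner_sum (K n : ℕ) (h : K ≤ n) :
    ∑ t ∈ range (n + 1), (if (n - t) % 2 = 0 ∧ K ≤ t then (t - K) / 2 + 1 else 0)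
      = Nat.choose ((n - K) / 2 + 2) 2 := by
  rw [← Finset.sum_range_reflect]
  have h1 : ∀ x ∈ range (n + 1),
      (if (n - (n + 1 - 1 - x)) % 2 = 0 ∧ K ≤ n + 1 - 1 - x then (n + 1 - 1 - x - K) / 2 + 1 else 0)
        = (if x % 2 = 0 ∧ x ≤ n - K then ((n - K) - x) / 2 + 1 else 0) := by
    intro x hx
    simp only [mem_range] at hx
    split_ifs <;> omega
  rw [Finset.sum_congr rfl h1]
  have h2 : ∑ x ∈ range (n + 1), (if x % 2 = 0 ∧ x ≤ n - K then ((n - K) - x) / 2 + 1 else 0)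
      = ∑ x ∈ range ((n - K) + 1), (if x % 2 = 0 ∧ x ≤ n - K then ((n - K) - x) / 2 + 1 else 0) := by
    refine (Finset.sum_subset ?_ ?_).symm
    · apply Finset.range_subset_range.2; omega
    · intro x hx hnx
      simp only [mem_range] at hx hnx
      rw [if_neg]; omega
  rw [h2]
  have h3 : ∀ x ∈ range ((n - K) + 1),
      (if x % 2 = 0 ∧ x ≤ n - K then ((n - K) - x) / 2 + 1 else 0)
        = (if x % 2 = 0 then ((n - K) - x) / 2 + 1 else 0) := by
    intro x hx
    simp only [mem_range] at hx
    split_ifs <;> omega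
  rw [Finset.sum_congr rfl h3, evensum]



section zmod
variable {m : ℕ} (hm : 1 < m) (hodd : Odd m)
include hm hodd

lemma unit_two : IsUnit (2 : ZMod m) := by
  haveI : NeZero m := ⟨by omega⟩
  have h := (ZMod.isUnit_iff_coprime 2 m).mpr (Nat.coprime_two_left.mpr hodd)
  simpa using h

lemma choose_periodic (b : ℕ) :
    ((Nat.choose (b + m + 2) 2 : ℕ) : ZMod m) = ((Nat.choose (b + 2) 2 : ℕ) : ZMod m) := by
  apply (unit_two hm hodd).mul_left_cancel
  calc (2 : ZMod m) * ((Nat.choose (b + m + 2) 2 : ℕ) : ZMod m)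
      = ((2 * Nat.choose ((b + m + 1) + 1) 2 : ℕ) : ZMod m) := by
        push_cast [show b + m + 2 = (b + m + 1) + 1 from by omega]; ring
    _ = (((b + m + 2) * (b + m + 1) : ℕ) : ZMod m) := by
        rw [two_mul_choose_two]
    _ = (((b + 2) * (b + 1) : ℕ) : ZMod m) := by
        push_cast [ZMod.natCast_self]; ring
    _ = ((2 * Nat.choose ((b + 1) + 1) 2 : ℕ) : ZMod m) := by
        rw [two_mul_choose_two]
    _ = (2 : ZMod m) * ((Nat.choose (b + 2) 2 : ℕ) : ZMod m) := by
        push_cast [show b + 2 = (b + 1) + 1 from by omega]; ring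

lemma choose_vanish : ((Nat.choose (m + 1) 2 : ℕ) : ZMod m) = 0 := by
  apply (unit_two hm hodd).mul_left_cancel
  rw [mul_zero]
  calc (2 : ZMod m) * ((Nat.choose (m + 1) 2 : ℕ) : ZMod m)
      = ((2 * Nat.choose (m + 1) 2 : ℕ) : ZMod m) := by push_cast; ring
    _ = (((m + 1) * m : ℕ) : ZMod m) := by rw [two_mul_choose_two]
    _ = 0 := by push_cast [ZMod.natCast_self]; ring

lemma ssum (M : ℕ) :
    ∑ i ∈ range (M + 1),
      (if 2 * m * i ≤ M then
        (if M - 2 * m * i ≤ 2 * m - 3 then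
          ((Nat.choose ((M - 2 * m * i) / 2 + 2) 2 : ℕ) : ZMod m) else 0) else 0)
      = ((Nat.choose (M / 2 + 2) 2 : ℕ) : ZMod m) := by
  induction M using Nat.strong_induction_on with
  | _ M ih =>
  by_cases hM : M < 2 * m
  · rw [Finset.sum_eq_single_of_mem 0 (by simp)]
    · have h0 : 2 * m * 0 = 0 := by ring
      rw [h0]
      simp only [Nat.sub_zero]
      by_cases hM3 : M ≤ 2 * m - 3
      · rw [if_pos (by omega), if_pos hM3]
      · rw [if_pos (by omega), if_neg hM3]
        have hhalf : M / 2 = m - 1 := by omega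
        rw [hhalf, show m - 1 + 2 = m + 1 from by omega]
        exact (choose_vanish hm hodd).symm
    · intro i hi hi0
      have h1 : 2 * m ≤ 2 * m * i := Nat.le_mul_of_pos_right (2 * m) (by omega)
      rw [if_neg (by omega)]
  · rw [Finset.sum_range_succ']
    have h0 : (if 2 * m * 0 ≤ M then
        (if M - 2 * m * 0 ≤ 2 * m - 3 then
          ((Nat.choose ((M - 2 * m * 0) / 2 + 2) 2 : ℕ) : ZMod m) else 0) else 0) = 0 := by
      have h00 : 2 * m * 0 = 0 := by ring
      rw [h00, if_pos (by omega)]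
      rw [if_neg (by omega)]
    rw [h0, add_zero]
    have hstep : ∀ i ∈ range M,
        (if 2 * m * (i + 1) ≤ M then
          (if M - 2 * m * (i + 1) ≤ 2 * m - 3 then
            ((Nat.choose ((M - 2 * m * (i + 1)) / 2 + 2) 2 : ℕ) : ZMod m) else 0) else 0)
        = (if 2 * m * i ≤ M - 2 * m then
          (if (M - 2 * m) - 2 * m * i ≤ 2 * m - 3 then
            ((Nat.choose (((M - 2 * m) - 2 * m * i) / 2 + 2) 2 : ℕ) : ZMod m) else 0) else 0) := by
      intro i _
      have hr : 2 * m * (i + 1) = 2 * m * i + 2 * m := by ring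
      by_cases h : 2 * m * i ≤ M - 2 * m
      · rw [if_pos (by omega), if_pos h,
          show M - 2 * m * (i + 1) = (M - 2 * m) - 2 * m * i from by omega]
      · rw [if_neg (by omega), if_neg h]
    rw [Finset.sum_congr rfl hstep]
    have hsub : ∑ i ∈ range M,
        (if 2 * m * i ≤ M - 2 * m then
          (if (M - 2 * m) - 2 * m * i ≤ 2 * m - 3 then
            ((Nat.choose (((M - 2 * m) - 2 * m * i) / 2 + 2) 2 : ℕ) : ZMod m) else 0) else 0)
        = ∑ i ∈ range ((M - 2 * m) + 1),
        (if 2 * m * i ≤ M - 2 * m then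
          (if (M - 2 * m) - 2 * m * i ≤ 2 * m - 3 then
            ((Nat.choose (((M - 2 * m) - 2 * m * i) / 2 + 2) 2 : ℕ) : ZMod m) else 0) else 0) := by
      refine (Finset.sum_subset ?_ ?_).symm
      · apply Finset.range_subset_range.2; omega
      · intro i hi hni
        simp only [mem_range] at hi hni
        have h1 : i ≤ 2 * m * i := Nat.le_mul_of_pos_left i (by omega)
        rw [if_neg (by omega)]
    rw [hsub, ih (M - 2 * m) (by omega)]
    have hb : M / 2 = (M - 2 * m) / 2 + m := by omega
    rw [hb]
    exact (choose_periodic hm hodd ((M - 2 * m) / 2)).symm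

end zmod



abbrev S (m n : ℕ) := {p : n.Partition // ∀ x ∈ p.parts, ∃ k : ℕ, x = m ^ k ∨ x = 2 * m ^ k}

lemma card_sigma' {ι : Type*} [Fintype ι] (f : ι → Type*) [∀ i, Finite (f i)] :
    Nat.card (Σ i, f i) = ∑ i, Nat.card (f i) := by
  letI : ∀ i, Fintype (f i) := fun i => Fintype.ofFinite _
  simp [Nat.card_eq_fintype_card]

section comb
variable {m : ℕ}

lemma not_dvd_two' (hm : 1 < m) (hodd : Odd m) : ¬ m ∣ 2 := by
  intro h
  have h2 := Nat.le_of_dvd (by norm_num) h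
  obtain ⟨ν, hν⟩ := hodd
  omega

lemma ones_twos (s : Multiset ℕ) (h : ∀ x ∈ s, x = 1 ∨ x = 2) :
    s = Multiset.replicate (s.count 1) 1 + Multiset.replicate (s.count 2) 2 := by
  ext a
  by_cases h1 : a = 1
  · subst h1; simp [Multiset.count_replicate]
  by_cases h2 : a = 2
  · subst h2; simp [Multiset.count_replicate]
  have ha : a ∉ s := fun hma => by rcases h a hma with h' | h' <;> omega
  rw [Multiset.count_eq_zero.2 ha]
  simp [Multiset.count_replicate, Ne.symm h1, Ne.symm h2]

lemma sum_map_mul (s : Multiset ℕ) : (s.map (fun x => m * x)).sum = m * s.sum := by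
  induction s using Multiset.induction_on with
  | empty => simp
  | cons a s ih => simp [ih, Nat.mul_add]

lemma sum_map_div (s : Multiset ℕ) (h : ∀ x ∈ s, m ∣ x) :
    m * (s.map (fun x => x / m)).sum = s.sum := by
  revert h
  induction s using Multiset.induction_on with
  | empty => intro _; simp
  | cons a s ih =>
    intro h
    rw [Multiset.map_cons, Multiset.sum_cons, Multiset.sum_cons, Nat.mul_add,
      ih (fun x hx => h x (Multiset.mem_cons_of_mem hx)),
      Nat.mul_div_cancel' (h a (Multiset.mem_cons_self a s))]

lemma fin_bound1 (hm0 : 0 < m) {n : ℕ} (t : Fin (n / m + 1)) : m * (t : ℕ) ≤ n := by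
  have h1 : (t : ℕ) ≤ n / m := by omega
  have h2 := (Nat.le_div_iff_mul_le hm0).1 h1
  have h3 := Nat.mul_comm m (t : ℕ)
  omega

lemma fin_bound2 {n : ℕ} {t : Fin (n / m + 1)} (b : Fin ((n - m * (t : ℕ)) / 2 + 1)) :
    2 * (b : ℕ) ≤ n - m * (t : ℕ) := by
  have h1 : (b : ℕ) ≤ (n - m * (t : ℕ)) / 2 := by omega
  have h2 := (Nat.le_div_iff_mul_le (by norm_num : (0:ℕ) < 2)).1 h1
  omega

/-- The backward map of the bijection. -/
noncomputable def B (hm0 : 0 < m) (n : ℕ)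
    (x : Σ t : Fin (n / m + 1), Fin ((n - m * (t : ℕ)) / 2 + 1) × S m (t : ℕ)) : S m n :=
  ⟨⟨Multiset.replicate (n - m * (x.1 : ℕ) - 2 * (x.2.1 : ℕ)) 1 +
      Multiset.replicate ((x.2.1 : ℕ)) 2 + (x.2.2.1.parts.map (fun y => m * y)),
    by
      intro i hi
      simp only [Multiset.mem_add, Multiset.mem_replicate, Multiset.mem_map] at hi
      rcases hi with (⟨-, rfl⟩ | ⟨-, rfl⟩) | ⟨y, hy, rfl⟩
      · norm_num
      · norm_num
      · exact Nat.mul_pos hm0 (x.2.2.1.parts_pos hy),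
    by
      rw [Multiset.sum_add, Multiset.sum_add, Multiset.sum_replicate, Multiset.sum_replicate,
        sum_map_mul, x.2.2.1.parts_sum, smul_eq_mul, smul_eq_mul]
      have h1 := fin_bound1 hm0 x.1
      have h2 := fin_bound2 x.2.1
      omega⟩,
    by
      intro i hi
      simp only [Multiset.mem_add, Multiset.mem_replicate, Multiset.mem_map] at hi
      rcases hi with (⟨-, rfl⟩ | ⟨-, rfl⟩) | ⟨y, hy, rfl⟩
      · exact ⟨0, Or.inl (by norm_num)⟩
      · exact ⟨0, Or.inr (by norm_num)⟩
      · obtain ⟨k, hk | hk⟩ := x.2.2.2 y hy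
        · exact ⟨k + 1, Or.inl (by rw [hk, pow_succ]; ring)⟩
        · exact ⟨k + 1, Or.inr (by rw [hk, pow_succ]; ring)⟩⟩

lemma B_injective (hm : 1 < m) (hodd : Odd m) (n : ℕ) :
    Function.Injective (B (m := m) (by omega) n) := by
  have hm0 : 0 < m := by omega
  rintro ⟨t₁, b₁, q₁⟩ ⟨t₂, b₂, q₂⟩ h
  have hparts : Multiset.replicate (n - m * (t₁ : ℕ) - 2 * (b₁ : ℕ)) 1 +
      Multiset.replicate ((b₁ : ℕ)) 2 + (q₁.1.parts.map (fun y => m * y)) =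
      Multiset.replicate (n - m * (t₂ : ℕ) - 2 * (b₂ : ℕ)) 1 +
      Multiset.replicate ((b₂ : ℕ)) 2 + (q₂.1.parts.map (fun y => m * y)) :=
    congrArg (fun p => p.1.parts) h
  -- big parts are equal
  have hnd2 : ¬ m ∣ 2 := not_dvd_two' hm hodd
  have hnd1 : ¬ m ∣ 1 := by rw [Nat.dvd_one]; omega
  have hfil : ∀ (a b : ℕ) (s : Multiset ℕ),
      Multiset.filter (fun x => m ∣ x)
        (Multiset.replicate a 1 + Multiset.replicate b 2 + s.map (fun y => m * y))
      = s.map (fun y => m * y) := by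
    intro a b s
    rw [Multiset.filter_add, Multiset.filter_add]
    rw [Multiset.filter_eq_nil.2 (fun x hx => by
      rw [Multiset.eq_of_mem_replicate hx]; exact hnd1)]
    rw [Multiset.filter_eq_nil.2 (fun x hx => by
      rw [Multiset.eq_of_mem_replicate hx]; exact hnd2)]
    rw [Multiset.filter_eq_self.2 (fun x hx => by
      obtain ⟨y, -, rfl⟩ := Multiset.mem_map.1 hx; exact Dvd.intro y rfl)]
    simp
  have hbig : q₁.1.parts.map (fun y => m * y) = q₂.1.parts.map (fun y => m * y) := by
    have := congrArg (Multiset.filter (fun x => m ∣ x)) hparts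
    rwa [hfil, hfil] at this
  have hq : q₁.1.parts = q₂.1.parts := by
    apply Multiset.map_injective (f := fun y => m * y) ?_ hbig
    intro a b hab
    exact Nat.eq_of_mul_eq_mul_left hm0 hab
  have hts : (t₁ : ℕ) = (t₂ : ℕ) := by
    have h1 := q₁.1.parts_sum
    have h2 := q₂.1.parts_sum
    rw [hq] at h1
    omega
  have hbs : (b₁ : ℕ) = (b₂ : ℕ) := by
    have hcnt : ∀ (a b : ℕ) (s : Multiset ℕ),
        Multiset.count 2 (Multiset.replicate a 1 + Multiset.replicate b 2 +
          s.map (fun y => m * y)) = b := by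
      intro a b s
      rw [Multiset.count_add, Multiset.count_add, Multiset.count_replicate,
        Multiset.count_replicate]
      have : Multiset.count 2 (s.map (fun y => m * y)) = 0 := by
        rw [Multiset.count_eq_zero]
        intro hmem
        obtain ⟨y, -, hy⟩ := Multiset.mem_map.1 hmem
        exact hnd2 ⟨y, hy.symm⟩
      rw [this]
      norm_num
    have := congrArg (Multiset.count 2) hparts
    rwa [hcnt, hcnt] at this
  have ht : t₁ = t₂ := Fin.ext hts
  subst ht
  refine congrArg (Sigma.mk t₁) ?_
  have hb : b₁ = b₂ := Fin.ext hbs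
  subst hb
  refine congrArg (Prod.mk b₁) ?_
  exact Subtype.ext (Nat.Partition.ext hq)

lemma B_surjective (hm : 1 < m) (hodd : Odd m) (n : ℕ) :
    Function.Surjective (B (m := m) (by omega) n) := by
  have hm0 : 0 < m := by omega
  have hnd2 : ¬ m ∣ 2 := not_dvd_two' hm hodd
  have hnd1 : ¬ m ∣ 1 := by rw [Nat.dvd_one]; omega
  rintro ⟨p, hp⟩
  classical
  set big := p.parts.filter (fun x => m ∣ x) with hbig_def
  set sml := p.parts.filter (fun x => ¬ m ∣ x) with hsml_def
  have hsplit : big + sml = p.parts := Multiset.filter_add_not _ _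
  have hdvd : ∀ x ∈ big, m ∣ x := fun x hx => Multiset.of_mem_filter hx
  have hsml12 : ∀ x ∈ sml, x = 1 ∨ x = 2 := by
    intro x hx
    have hxp : x ∈ p.parts := Multiset.mem_of_mem_filter hx
    have hnx : ¬ m ∣ x := by
      simpa using (Multiset.mem_filter.1 hx).2
    obtain ⟨k, hk | hk⟩ := hp x hxp
    · cases k with
      | zero => left; simpa using hk
      | succ k' => exact absurd (hk ▸ dvd_pow_self m (Nat.succ_ne_zero k')) hnx
    · cases k with
      | zero => right; simpa using hk
      | succ k' =>
        exfalso
        apply hnx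
        rw [hk, pow_succ]
        exact ⟨2 * m ^ k', by ring⟩
  set a := Multiset.count 1 p.parts with ha_def
  set b := Multiset.count 2 p.parts with hb_def
  have hcnt1 : Multiset.count 1 sml = a := by
    rw [hsml_def, Multiset.count_filter, if_pos hnd1]
  have hcnt2 : Multiset.count 2 sml = b := by
    rw [hsml_def, Multiset.count_filter, if_pos hnd2]
  have hsml : sml = Multiset.replicate a 1 + Multiset.replicate b 2 := by
    rw [← hcnt1, ← hcnt2]
    exact ones_twos sml hsml12
  set t := (big.map (fun x => x / m)).sum with ht_def
  have hbigsum : big.sum = m * t := (sum_map_div big hdvd).symm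
  have hbig_eq : (big.map (fun x => x / m)).map (fun y => m * y) = big := by
    rw [Multiset.map_map]
    have : ∀ x ∈ big, ((fun y => m * y) ∘ fun x => x / m) x = id x := by
      intro x hx
      exact Nat.mul_div_cancel' (hdvd x hx)
    rw [Multiset.map_congr rfl this, Multiset.map_id]
  have hsum : m * t + (a + 2 * b) = n := by
    have h1 : big.sum + sml.sum = n := by rw [← Multiset.sum_add, hsplit, p.parts_sum]
    have h2 : sml.sum = a * 1 + b * 2 := by
      rw [hsml, Multiset.sum_add, Multiset.sum_replicate, Multiset.sum_replicate,
        smul_eq_mul, smul_eq_mul]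
    omega
  -- the partition q of t
  have hqpos : ∀ {i : ℕ}, i ∈ big.map (fun x => x / m) → 0 < i := by
    intro i hi
    obtain ⟨x, hx, rfl⟩ := Multiset.mem_map.1 hi
    have hxp : 0 < x := p.parts_pos (Multiset.mem_of_mem_filter hx)
    exact Nat.div_pos (Nat.le_of_dvd hxp (hdvd x hx)) hm0
  have hqgood : ∀ y ∈ big.map (fun x => x / m), ∃ k : ℕ, y = m ^ k ∨ y = 2 * m ^ k := by
    intro y hy
    obtain ⟨x, hx, rfl⟩ := Multiset.mem_map.1 hy
    obtain ⟨k, hk | hk⟩ := hp x (Multiset.mem_of_mem_filter hx)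
    · cases k with
      | zero =>
        exfalso; apply hnd1; rw [← show x = 1 from by simpa using hk]; exact hdvd x hx
      | succ k' =>
        refine ⟨k', Or.inl ?_⟩
        rw [hk, pow_succ, mul_comm (m ^ k') m, Nat.mul_div_cancel_left _ hm0]
    · cases k with
      | zero =>
        exfalso; apply hnd2; rw [← show x = 2 from by simpa using hk]; exact hdvd x hx
      | succ k' =>
        refine ⟨k', Or.inr ?_⟩
        rw [hk, pow_succ]
        rw [show 2 * (m ^ k' * m) = m * (2 * m ^ k') from by ring,
          Nat.mul_div_cancel_left _ hm0]
  set q : Nat.Partition t := ⟨big.map (fun x => x / m), hqpos, rfl⟩ with hq_def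
  have htle : t ≤ n / m := by
    have h1 : m * t ≤ n := by omega
    have h2 := Nat.mul_comm m t
    exact (Nat.le_div_iff_mul_le hm0).2 (by omega)
  have hble : b ≤ (n - m * t) / 2 := by
    apply (Nat.le_div_iff_mul_le (by norm_num : (0:ℕ) < 2)).2
    omega
  refine ⟨⟨⟨t, by omega⟩, ⟨b, by show b < (n - m * t) / 2 + 1; omega⟩, ⟨q, hqgood⟩⟩, ?_⟩
  apply Subtype.ext
  apply Nat.Partition.ext
  show Multiset.replicate (n - m * t - 2 * b) 1 + Multiset.replicate b 2 +
      ((big.map (fun x => x / m)).map (fun y => m * y)) = p.parts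
  rw [hbig_eq]
  have haval : n - m * t - 2 * b = a := by omega
  rw [haval, ← hsml, ← hsplit]
  exact add_comm sml big

lemma rec1 (hm : 1 < m) (hodd : Odd m) (n : ℕ) :
    maryTwicePartitions m n
      = ∑ t ∈ range (n / m + 1), ((n - m * t) / 2 + 1) * maryTwicePartitions m t := by
  have hm0 : 0 < m := by omega
  have hbij : Nat.card (Σ t : Fin (n / m + 1), Fin ((n - m * (t : ℕ)) / 2 + 1) × S m (t : ℕ))
      = Nat.card (S m n) :=
    Nat.card_eq_of_bijective _ ⟨B_injective hm hodd n, B_surjective hm hodd n⟩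
  have h1 : maryTwicePartitions m n = Nat.card (S m n) := rfl
  rw [h1, ← hbij, card_sigma']
  rw [← Fin.sum_univ_eq_sum_range (fun t => ((n - m * t) / 2 + 1) * maryTwicePartitions m t)]
  apply Finset.sum_congr rfl
  intro t _
  rw [Nat.card_prod]
  have hfin : Nat.card (Fin ((n - m * (t : ℕ)) / 2 + 1)) = (n - m * (t : ℕ)) / 2 + 1 := by
    simp [Nat.card_eq_fintype_card]
  rw [hfin]
  rfl

end comb
section glue
variable {m : ℕ}

/-- Coefficient of the polynomial factor `(1+q)·S(q)`. -/
noncomputable def eZ (m : ℕ) : ℕ → ZMod m := fun s =>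
  if s ≤ 2 * m - 3 then ((Nat.choose (s / 2 + 2) 2 : ℕ) : ZMod m) else 0

noncomputable def cZ (m : ℕ) : ℕ → ZMod m := fun t =>
  ((maryTwicePartitions m t : ℕ) : ZMod m)

noncomputable def TZ (m : ℕ) : ℕ → ZMod m := fun w =>
  ∑ t ∈ range (w + 1), if (w - t) % 2 = 0 then cZ m t else 0

noncomputable def muZ (m : ℕ) : ZMod m := (((m + 1) / 2 : ℕ) : ZMod m)

lemma castsum (s : Finset ℕ) (P : ℕ → Prop) [DecidablePred P] (f : ℕ → ℕ) :
    ((∑ x ∈ s, if P x then f x else 0 : ℕ) : ZMod m)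
      = ∑ x ∈ s, (if P x then ((f x : ℕ) : ZMod m) else 0) := by
  rw [Nat.cast_sum]
  exact Finset.sum_congr rfl fun x _ => by split_ifs <;> simp

lemma rec1' (hm : 1 < m) (hodd : Odd m) {n t : ℕ} (ht : t ≤ n) :
    maryTwicePartitions m t
      = ∑ u ∈ range (n + 1),
          (if m * u ≤ t then ((t - m * u) / 2 + 1) * maryTwicePartitions m u else 0) := by
  have hm0 : 0 < m := by omega
  rw [rec1 hm hodd t]
  have h1 : ∀ u ∈ range (t / m + 1), ((t - m * u) / 2 + 1) * maryTwicePartitions m u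
      = (if m * u ≤ t then ((t - m * u) / 2 + 1) * maryTwicePartitions m u else 0) := by
    intro u hu
    simp only [mem_range] at hu
    rw [if_pos]
    have h2 : u ≤ t / m := by omega
    have h3 := (Nat.le_div_iff_mul_le hm0).1 h2
    have h4 := Nat.mul_comm m u
    omega
  rw [Finset.sum_congr rfl h1]
  apply Finset.sum_subset
  · apply Finset.range_subset_range.2
    have := Nat.div_le_self t m
    omega
  · intro u hu hnu
    simp only [mem_range] at hu hnu
    rw [if_neg]
    intro hc
    have h2 : u * m ≤ t := by have := Nat.mul_comm m u; omega
    have h3 := (Nat.le_div_iff_mul_le hm0).2 h2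
    omega

lemma Tnat (hm : 1 < m) (hodd : Odd m) (n : ℕ) :
    (∑ t ∈ range (n + 1), if (n - t) % 2 = 0 then maryTwicePartitions m t else 0)
      = ∑ u ∈ range (n + 1),
          (if m * u ≤ n then Nat.choose ((n - m * u) / 2 + 2) 2 * maryTwicePartitions m u
           else 0) := by
  have step1 : ∀ t ∈ range (n + 1),
      (if (n - t) % 2 = 0 then maryTwicePartitions m t else 0)
        = ∑ u ∈ range (n + 1),
            (if (n - t) % 2 = 0 ∧ m * u ≤ t then
              ((t - m * u) / 2 + 1) * maryTwicePartitions m u else 0) := by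
    intro t ht
    simp only [mem_range] at ht
    by_cases hp : (n - t) % 2 = 0
    · rw [if_pos hp, rec1' hm hodd (show t ≤ n by omega)]
      apply Finset.sum_congr rfl
      intro u _
      simp [hp]
    · rw [if_neg hp]
      symm
      apply Finset.sum_eq_zero
      intro u _
      rw [if_neg (by tauto)]
  rw [Finset.sum_congr rfl step1, Finset.sum_comm]
  apply Finset.sum_congr rfl
  intro u _
  by_cases hg : m * u ≤ n
  · rw [if_pos hg]
    have hsplit : ∀ t ∈ range (n + 1),
        (if (n - t) % 2 = 0 ∧ m * u ≤ t then
          ((t - m * u) / 2 + 1) * maryTwicePartitions m u else 0)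
        = (if (n - t) % 2 = 0 ∧ m * u ≤ t then ((t - m * u) / 2 + 1) else 0)
            * maryTwicePartitions m u := by
      intro t _
      split_ifs <;> simp
    rw [Finset.sum_congr rfl hsplit, ← Finset.sum_mul, inner_sum (m * u) n hg]
  · rw [if_neg hg]
    apply Finset.sum_eq_zero
    intro t ht
    simp only [mem_range] at ht
    rw [if_neg]
    rintro ⟨-, h2⟩
    omega

lemma lemI (hm : 1 < m) (hodd : Odd m) (n : ℕ) :
    cZ m (m * (n + 1) - 1) = muZ m * TZ m n := by
  have hm0 : 0 < m := by omega
  have hdiv : (m * (n + 1) - 1) / m = n := by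
    have h1 : m * (n + 1) = m * n + m := by ring
    have h2 : m * (n + 1) - 1 = m * n + (m - 1) := by omega
    rw [h2, Nat.mul_add_div hm0, Nat.div_eq_of_lt (by omega)]
    omega
  simp only [cZ, TZ]
  rw [rec1 hm hodd (m * (n + 1) - 1), hdiv]
  rw [Nat.cast_sum, Finset.mul_sum]
  apply Finset.sum_congr rfl
  intro t ht
  simp only [mem_range] at ht
  rw [Nat.cast_mul]
  obtain ⟨ν, hν⟩ := hodd
  have h1 : m * (n + 1) = m * t + m * (n - t + 1) := by
    rw [← Nat.mul_add]
    congr 1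
    omega
  by_cases hs : (n - t) % 2 = 0
  · have h2 : m * (n - t + 1) = 2 * (m * ((n - t) / 2) + ν) + 1 := by
      rw [show n - t + 1 = 2 * ((n - t) / 2) + 1 from by omega, hν]
      ring
    have h3 : (m * (n + 1) - 1 - m * t) / 2 + 1 = m * ((n - t) / 2) + (ν + 1) := by omega
    rw [h3, if_pos hs, muZ, show (m + 1) / 2 = ν + 1 from by omega]
    push_cast
    rw [ZMod.natCast_self]
    ring
  · have h2 : m * (n - t + 1) = 2 * (m * ((n - t) / 2 + 1)) := by
      rw [show n - t + 1 = 2 * ((n - t) / 2) + 2 from by omega]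
      ring
    have hW : 1 ≤ m * ((n - t) / 2 + 1) := Nat.mul_pos hm0 (by omega)
    have h3 : (m * (n + 1) - 1 - m * t) / 2 + 1 = m * ((n - t) / 2 + 1) := by omega
    rw [h3, if_neg hs]
    push_cast
    rw [ZMod.natCast_self]
    ring

lemma lemV (hm : 1 < m) (hodd : Odd m) (n t : ℕ) :
    ∑ w ∈ range (n + 1),
      (if m * w ≤ n ∧ t ≤ w ∧ (w - t) % 2 = 0 then eZ m (n - m * w) else 0)
    = if m * t ≤ n then ((Nat.choose ((n - m * t) / 2 + 2) 2 : ℕ) : ZMod m) else 0 := by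
  have hm0 : 0 < m := by omega
  by_cases hmt : m * t ≤ n
  · rw [if_pos hmt, ← ssum hm hodd (n - m * t)]
    have hrhs : ∀ i ∈ range (n - m * t + 1),
        (if 2 * m * i ≤ n - m * t then
          (if (n - m * t) - 2 * m * i ≤ 2 * m - 3 then
            ((Nat.choose (((n - m * t) - 2 * m * i) / 2 + 2) 2 : ℕ) : ZMod m) else 0) else 0)
        = (if 2 * m * i ≤ n - m * t then eZ m ((n - m * t) - 2 * m * i) else 0) := by
      intro i _
      rw [eZ]
    rw [Finset.sum_congr rfl hrhs, ← Finset.sum_filter, ← Finset.sum_filter]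
    refine Finset.sum_nbij' (fun w => (w - t) / 2) (fun i => t + 2 * i) ?_ ?_ ?_ ?_ ?_
    · intro w hw
      simp only [mem_filter, mem_range] at hw ⊢
      obtain ⟨hwn, hmw, htw, hpar⟩ := hw
      have h1 : w = t + 2 * ((w - t) / 2) := by omega
      have h5 : m * w = m * t + 2 * (m * ((w - t) / 2)) := by
        conv_lhs => rw [h1]
        ring
      have h3 : 2 * m * ((w - t) / 2) = 2 * (m * ((w - t) / 2)) := by ring
      have h4 : (w - t) / 2 ≤ m * ((w - t) / 2) := Nat.le_mul_of_pos_left _ hm0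
      omega
    · intro i hi
      simp only [mem_filter, mem_range] at hi ⊢
      obtain ⟨hin, h2mi⟩ := hi
      have h2 : m * (t + 2 * i) = m * t + 2 * (m * i) := by ring
      have h3 : 2 * m * i = 2 * (m * i) := by ring
      have h4 : t + 2 * i ≤ m * (t + 2 * i) := Nat.le_mul_of_pos_left _ hm0
      omega
    · intro w hw
      simp only [mem_filter, mem_range] at hw
      omega
    · intro i hi
      simp only [mem_filter, mem_range] at hi
      omega
    · intro w hw
      simp only [mem_filter, mem_range] at hw
      obtain ⟨hwn, hmw, htw, hpar⟩ := hw
      have h1 : w = t + 2 * ((w - t) / 2) := by omega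
      have h5 : m * w = m * t + 2 * (m * ((w - t) / 2)) := by
        conv_lhs => rw [h1]
        ring
      have h3 : 2 * m * ((w - t) / 2) = 2 * (m * ((w - t) / 2)) := by ring
      have hnm : n - m * w = (n - m * t) - 2 * m * ((w - t) / 2) := by omega
      rw [hnm]
  · rw [if_neg hmt]
    apply Finset.sum_eq_zero
    intro w hw
    rw [if_neg]
    rintro ⟨h1, h2, -⟩
    have h3 : m * t ≤ m * w := Nat.mul_le_mul_left m h2
    omega

lemma TZext (hm : 1 < m) {n w : ℕ} (hw : w ≤ n) :
    TZ m w = ∑ t ∈ range (n + 1), (if t ≤ w ∧ (w - t) % 2 = 0 then cZ m t else 0) := by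
  rw [TZ]
  have h1 : ∀ t ∈ range (w + 1), (if (w - t) % 2 = 0 then cZ m t else 0)
      = (if t ≤ w ∧ (w - t) % 2 = 0 then cZ m t else 0) := by
    intro t ht
    simp only [mem_range] at ht
    have : t ≤ w := by omega
    simp [this]
  rw [Finset.sum_congr rfl h1]
  apply Finset.sum_subset
  · apply Finset.range_subset_range.2; omega
  · intro t ht hnt
    simp only [mem_range] at ht hnt
    rw [if_neg]
    rintro ⟨h1', -⟩
    omega

lemma keylemma (hm : 1 < m) (hodd : Odd m) (n : ℕ) :
    cZ m (m * (n + 1) - 1)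
      = ∑ w ∈ range (n + 1),
          (if m * w ≤ n then eZ m (n - m * w) * cZ m (m * (w + 1) - 1) else 0) := by
  have hm0 : 0 < m := by omega
  have hR : ∀ w ∈ range (n + 1),
      (if m * w ≤ n then eZ m (n - m * w) * cZ m (m * (w + 1) - 1) else 0)
        = ∑ t ∈ range (n + 1),
            (if m * w ≤ n ∧ t ≤ w ∧ (w - t) % 2 = 0 then
              eZ m (n - m * w) * (muZ m * cZ m t) else 0) := by
    intro w _
    by_cases hg : m * w ≤ n
    · have hwn : w ≤ n := le_trans (Nat.le_mul_of_pos_left w hm0) hg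
      rw [if_pos hg, lemI hm hodd w, TZext hm hwn, Finset.mul_sum, Finset.mul_sum]
      apply Finset.sum_congr rfl
      intro t _
      simp only [mul_ite, mul_zero, hg, true_and]
    · rw [if_neg hg]
      symm
      apply Finset.sum_eq_zero
      intro t _
      rw [if_neg (by tauto)]
  rw [Finset.sum_congr rfl hR, Finset.sum_comm]
  have hV : ∀ t ∈ range (n + 1),
      (∑ w ∈ range (n + 1),
        (if m * w ≤ n ∧ t ≤ w ∧ (w - t) % 2 = 0 then
          eZ m (n - m * w) * (muZ m * cZ m t) else 0))
      = (if m * t ≤ n then ((Nat.choose ((n - m * t) / 2 + 2) 2 : ℕ) : ZMod m) else 0)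
          * (muZ m * cZ m t) := by
    intro t _
    rw [← lemV hm hodd n t, Finset.sum_mul]
    apply Finset.sum_congr rfl
    intro w _
    split_ifs <;> simp
  rw [Finset.sum_congr rfl hV, lemI hm hodd n]
  have hT : TZ m n = ∑ t ∈ range (n + 1),
      (if m * t ≤ n then
        ((Nat.choose ((n - m * t) / 2 + 2) 2 : ℕ) : ZMod m) * cZ m t else 0) := by
    have hcast := congrArg (fun x : ℕ => (x : ZMod m)) (Tnat hm hodd n)
    rw [castsum, castsum] at hcast
    rw [TZ]
    simp only [cZ]
    rw [hcast]
    apply Finset.sum_congr rfl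
    intro u _
    split_ifs with h
    · push_cast
      ring
    · rfl
  rw [hT, Finset.mul_sum]
  apply Finset.sum_congr rfl
  intro t _
  split_ifs with h
  · ring
  · ring

end glue

section coeffs
variable {m : ℕ}

open PowerSeries

lemma coeffS (i : ℕ) :
    (PowerSeries.coeff i)
        (∑ j ∈ Finset.range (m - 1),
          PowerSeries.C ((Nat.choose (j + 2) 2 : ZMod m)) * X ^ (2 * j))
      = if i % 2 = 0 ∧ i / 2 < m - 1 then ((Nat.choose (i / 2 + 2) 2 : ℕ) : ZMod m) else 0 := by
  rw [map_sum]
  have h1 : ∀ j ∈ range (m - 1),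
      (PowerSeries.coeff i)
          (PowerSeries.C ((Nat.choose (j + 2) 2 : ZMod m)) * X ^ (2 * j))
        = (if i = 2 * j then ((Nat.choose (j + 2) 2 : ℕ) : ZMod m) else 0) := by
    intro j _
    rw [PowerSeries.coeff_C_mul, PowerSeries.coeff_X_pow]
    split_ifs <;> simp
  rw [Finset.sum_congr rfl h1]
  by_cases hk : i % 2 = 0 ∧ i / 2 < m - 1
  · rw [if_pos hk]
    rw [Finset.sum_eq_single (i / 2)]
    · rw [if_pos (by omega)]
    · intro j _ hj
      rw [if_neg (by omega)]
    · intro hni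
      exact absurd (Finset.mem_range.2 hk.2) hni
  · rw [if_neg hk]
    apply Finset.sum_eq_zero
    intro j hj
    simp only [Finset.mem_range] at hj
    rw [if_neg]
    intro hij
    exact hk (by omega)

lemma coeffE (hm : 1 < m) (i : ℕ) :
    (PowerSeries.coeff i)
        ((1 + X) * ∑ j ∈ Finset.range (m - 1),
          PowerSeries.C ((Nat.choose (j + 2) 2 : ZMod m)) * X ^ (2 * j))
      = eZ m i := by
  rw [add_mul, one_mul, map_add]
  cases i with
  | zero =>
    rw [PowerSeries.coeff_zero_X_mul, add_zero, coeffS]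
    simp only [eZ]
    rw [if_pos (show True ∧ 0 / 2 < m - 1 from ⟨trivial, by omega⟩),
      if_pos (show (0:ℕ) ≤ 2 * m - 3 from by omega)]
  | succ i' =>
    rw [PowerSeries.coeff_succ_X_mul, coeffS, coeffS]
    simp only [eZ]
    by_cases hp : i' % 2 = 0
    · rw [if_neg (show ¬((i' + 1) % 2 = 0 ∧ (i' + 1) / 2 < m - 1) from by omega), zero_add]
      have h2 : (i' + 1) / 2 = i' / 2 := by omega
      rw [h2]
      exact if_congr (by omega) rfl rfl
    · rw [if_neg (show ¬(i' % 2 = 0 ∧ i' / 2 < m - 1) from by omega), add_zero]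
      exact if_congr (by omega) rfl rfl

lemma reindexDvd (hm0 : 0 < m) (n : ℕ) (g : ℕ → ZMod m) :
    ∑ j ∈ range (n + 1), (if m ∣ j then g j else 0)
      = ∑ w ∈ range (n + 1), (if m * w ≤ n then g (m * w) else 0) := by
  rw [← Finset.sum_filter, ← Finset.sum_filter]
  refine Finset.sum_nbij' (fun j => j / m) (fun w => m * w) ?_ ?_ ?_ ?_ ?_
  · intro j hj
    simp only [mem_filter, mem_range] at hj ⊢
    obtain ⟨hjn, hdvd⟩ := hj
    have h1 := Nat.mul_div_cancel' hdvd
    have h2 := Nat.div_le_self j m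
    omega
  · intro w hw
    simp only [mem_filter, mem_range] at hw ⊢
    obtain ⟨hwn, hmw⟩ := hw
    exact ⟨by omega, Dvd.intro w rfl⟩
  · intro j hj
    simp only [mem_filter, mem_range] at hj
    exact Nat.mul_div_cancel' hj.2
  · intro w hw
    simp only [mem_filter, mem_range] at hw
    exact Nat.mul_div_cancel_left w hm0
  · intro j hj
    simp only [mem_filter, mem_range] at hj
    rw [Nat.mul_div_cancel' hj.2]

end coeffs
end MTPaux

open MTPaux in
theorem D_functional_equation_odd (m : ℕ) (hm : 1 < m) (hodd : Odd m) :
    let d : ℕ → ℕ := fun n => maryTwicePartitions m (m * (n + 1) - 1)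
    let D : PowerSeries (ZMod m) := PowerSeries.mk fun n => (d n : ZMod m)
    D = (1 + X) *
        (∑ j ∈ Finset.range (m - 1),
          PowerSeries.C ((Nat.choose (j + 2) 2 : ZMod m)) * X ^ (2 * j)) *
      substPow (ZMod m) m D := by
  intro d D
  have hm0 : 0 < m := by omega
  have hD : D = PowerSeries.mk (fun n => cZ m (m * (n + 1) - 1)) := rfl
  rw [hD]
  ext n
  rw [PowerSeries.coeff_mk, PowerSeries.coeff_mul,
    Finset.Nat.sum_antidiagonal_eq_sum_range_succ_mk]
  have hsub : ∀ k : ℕ,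
      (PowerSeries.coeff k)
          (substPow (ZMod m) m (PowerSeries.mk (fun n => cZ m (m * (n + 1) - 1))))
        = (if m ∣ k then cZ m (m * (k / m + 1) - 1) else 0) := by
    intro k
    simp only [substPow, PowerSeries.coeff_mk]
  have h1 : ∀ k ∈ Finset.range (n + 1),
      (PowerSeries.coeff k)
          ((1 + X) * ∑ j ∈ Finset.range (m - 1),
            PowerSeries.C ((Nat.choose (j + 2) 2 : ZMod m)) * X ^ (2 * j))
        * (PowerSeries.coeff (n - k))
            (substPow (ZMod m) m (PowerSeries.mk (fun n => cZ m (m * (n + 1) - 1))))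
      = (if m ∣ (n - k) then eZ m k * cZ m (m * ((n - k) / m + 1) - 1) else 0) := by
    intro k _
    rw [coeffE hm k, hsub (n - k), mul_ite, mul_zero]
  rw [Finset.sum_congr rfl h1, ← Finset.sum_range_reflect]
  have h2 : ∀ x ∈ Finset.range (n + 1),
      (if m ∣ (n - (n + 1 - 1 - x)) then
        eZ m (n + 1 - 1 - x) * cZ m (m * ((n - (n + 1 - 1 - x)) / m + 1) - 1) else 0)
      = (if m ∣ x then eZ m (n - x) * cZ m (m * (x / m + 1) - 1) else 0) := by
    intro x hx
    simp only [Finset.mem_range] at hx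
    have e1 : n + 1 - 1 - x = n - x := by omega
    have e2 : n - (n - x) = x := by omega
    rw [e1, e2]
  rw [Finset.sum_congr rfl h2,
    reindexDvd hm0 n (fun j => eZ m (n - j) * cZ m (m * (j / m + 1) - 1))]
  have h3 : ∀ w ∈ Finset.range (n + 1),
      (if m * w ≤ n then eZ m (n - m * w) * cZ m (m * ((m * w) / m + 1) - 1) else 0)
      = (if m * w ≤ n then eZ m (n - m * w) * cZ m (m * (w + 1) - 1) else 0) := by
    intro w _
    rw [Nat.mul_div_cancel_left w hm0]
  rw [Finset.sum_congr rfl h3]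
  exact keylemma hm hodd n
end
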